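/- Let m = 0 or m > 2 and i ∈ Z_m. The assignment 𝒦⁺_α ↦ K_{α,i}, 𝒦⁻_α ↦ K_{α,i+1}, ν⁺_M ↦ e_{M,i}, ν⁻_M ↦ e_{M,i+1} extends to an algebra homomorphism from the dual Heisenberg double Hall algebra ȞD(A) into the Bridgeland Hall algebra DH_m(A). -/
import Mathlib


noncomputable section

open scoped TensorProduct

variable {ι : Type*} {K : Type*} [AddCommGroup K]

/-- `gammaHall g a M N X Y = γ^{XY}_{MN} = (a_X a_Y/(a_M a_N)) Σ_{[L]} a_L g^M_{L X} g^N_{Y L}`,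
where `g L M N = g^L_{M N}` are the Hall numbers and `a X = |Aut X|`. -/
def gammaHall (g : ι → ι → ι → ℕ) (a : ι → ℕ) (M N X Y : ι) : ℂ :=
  ((a X * a Y : ℕ) : ℂ) / ((a M * a N : ℕ) : ℂ) *
    ∑ᶠ L : ι, ((a L * g M L X * g N Y L : ℕ) : ℂ)

/-- Generators of the dual Heisenberg double Hall algebra: `ν⁺_M`, `ν⁻_M`, `𝒦⁺_α`, `𝒦⁻_α`. -/
abbrev HcDGen (ι K : Type*) := (ι ⊕ ι) ⊕ (K ⊕ K)

variable (ι K) in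
/-- `ν⁺_M` as an element of the free algebra. -/
def νp (M : ι) : FreeAlgebra ℂ (HcDGen ι K) := FreeAlgebra.ι ℂ (Sum.inl (Sum.inl M))
variable (ι K) in
/-- `ν⁻_M` as an element of the free algebra. -/
def νm (M : ι) : FreeAlgebra ℂ (HcDGen ι K) := FreeAlgebra.ι ℂ (Sum.inl (Sum.inr M))
variable (ι K) in
/-- `𝒦⁺_α` as an element of the free algebra. -/
def κcp (α : K) : FreeAlgebra ℂ (HcDGen ι K) := FreeAlgebra.ι ℂ (Sum.inr (Sum.inl α))
variable (ι K) in
/-- `𝒦⁻_α` as an element of the free algebra. -/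
def κcm (α : K) : FreeAlgebra ℂ (HcDGen ι K) := FreeAlgebra.ι ℂ (Sum.inr (Sum.inr α))

/-- The defining relations (2.8)–(2.12) of the dual Heisenberg double Hall
algebra `ȞD(A)`. -/
inductive HcDRel (g : ι → ι → ι → ℕ) (a : ι → ℕ) (cls : ι → K) (e s : K → K → ℤ) (v : ℂ) :
    FreeAlgebra ℂ (HcDGen ι K) → FreeAlgebra ℂ (HcDGen ι K) → Prop
  | hallP (M N : ι) : HcDRel g a cls e s v (νp ι K M * νp ι K N)
      (∑ᶠ L : ι, (v ^ e (cls M) (cls N) * g L M N) • νp ι K L)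
  | hallM (M N : ι) : HcDRel g a cls e s v (νm ι K M * νm ι K N)
      (∑ᶠ L : ι, (v ^ e (cls M) (cls N) * g L M N) • νm ι K L)
  | KpNp (α : K) (M : ι) : HcDRel g a cls e s v (κcp ι K α * νp ι K M)
      (v ^ s α (cls M) • (νp ι K M * κcp ι K α))
  | KmNm (α : K) (M : ι) : HcDRel g a cls e s v (κcm ι K α * νm ι K M)
      (v ^ s α (cls M) • (νm ι K M * κcm ι K α))
  | KpKp (α β : K) : HcDRel g a cls e s v (κcp ι K α * κcp ι K β) (κcp ι K (α + β))
  | KmKm (α β : K) : HcDRel g a cls e s v (κcm ι K α * κcm ι K β) (κcm ι K (α + β))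
  | KpKm (α β : K) : HcDRel g a cls e s v (κcp ι K α * κcm ι K β)
      (v ^ (-s α β) • (κcm ι K β * κcp ι K α))
  | KmNp (α : K) (M : ι) : HcDRel g a cls e s v (κcm ι K α * νp ι K M)
      (νp ι K M * κcm ι K α)
  | KpNm (α : K) (M : ι) : HcDRel g a cls e s v (κcp ι K α * νm ι K M)
      (v ^ (-s α (cls M)) • (νm ι K M * κcp ι K α))
  | cross (N M : ι) : HcDRel g a cls e s v (νm ι K N * νp ι K M)
      (∑ᶠ p : ι × ι,
        (v ^ e (cls N - cls p.2) (cls p.2 - cls p.1) * gammaHall g a N M p.2 p.1) •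
          (κcp ι K (cls N - cls p.2) * νp ι K p.1 * νm ι K p.2))

/-- The dual Heisenberg double Hall algebra `ȞD(A)`. -/
def HcDAlg (g : ι → ι → ι → ℕ) (a : ι → ℕ) (cls : ι → K) (e s : K → K → ℤ) (v : ℂ) : Type _ :=
  RingQuot (HcDRel g a cls e s v)

variable (g : ι → ι → ι → ℕ) (a : ι → ℕ) (cls : ι → K) (e s : K → K → ℤ) (v : ℂ)

instance : Ring (HcDAlg g a cls e s v) := inferInstanceAs (Ring (RingQuot _))
instance : Algebra ℂ (HcDAlg g a cls e s v) := inferInstanceAs (Algebra ℂ (RingQuot _))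

/-- The generator `ν⁺_M` of `ȞD(A)`. -/
def HcDνp (M : ι) : HcDAlg g a cls e s v := RingQuot.mkAlgHom ℂ _ (νp ι K M)
/-- The generator `ν⁻_M` of `ȞD(A)`. -/
def HcDνm (M : ι) : HcDAlg g a cls e s v := RingQuot.mkAlgHom ℂ _ (νm ι K M)
/-- The generator `𝒦⁺_α` of `ȞD(A)`. -/
def HcDκp (α : K) : HcDAlg g a cls e s v := RingQuot.mkAlgHom ℂ _ (κcp ι K α)
/-- The generator `𝒦⁻_α` of `ȞD(A)`. -/
def HcDκm (α : K) : HcDAlg g a cls e s v := RingQuot.mkAlgHom ℂ _ (κcm ι K α)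

/-- Generators of the Bridgeland Hall algebra of `m`-cyclic complexes:
`e_{M,i}` and `K_{α,i}` with `i ∈ Z_m` (where `ZMod 0 = ℤ`). -/
abbrev DHmGen (ι K : Type*) (m : ℕ) := (ι × ZMod m) ⊕ (K × ZMod m)

variable (ι K) in
/-- `e_{M,i}` as an element of the free algebra. -/
def eGen {m : ℕ} (M : ι) (i : ZMod m) : FreeAlgebra ℂ (DHmGen ι K m) :=
  FreeAlgebra.ι ℂ (Sum.inl (M, i))
variable (ι K) in
/-- `K_{α,i}` as an element of the free algebra. -/
def kGen {m : ℕ} (α : K) (i : ZMod m) : FreeAlgebra ℂ (DHmGen ι K m) :=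
  FreeAlgebra.ι ℂ (Sum.inr (α, i))

/-- The defining relations (4.1)–(4.5) of the Bridgeland Hall algebra `DH_m(A)` of
`m`-cyclic complexes (for `m = 0` or `m > 2`); the condition `i = m - 1 + j` of the
paper is rendered as `j = i + 1` in `Z_m`. -/
inductive DHmRel (m : ℕ) (g : ι → ι → ι → ℕ) (a : ι → ℕ) (cls : ι → K)
    (e s : K → K → ℤ) (v : ℂ) :
    FreeAlgebra ℂ (DHmGen ι K m) → FreeAlgebra ℂ (DHmGen ι K m) → Prop
  | KKsame (α β : K) (i : ZMod m) :
      DHmRel m g a cls e s v (kGen ι K α i * kGen ι K β i) (kGen ι K (α + β) i)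
  | KKup (α β : K) (i j : ZMod m) (h : i = j + 1) :
      DHmRel m g a cls e s v (kGen ι K α i * kGen ι K β j)
        (v ^ s α β • (kGen ι K β j * kGen ι K α i))
  | KKdown (α β : K) (i j : ZMod m) (h : j = i + 1) :
      DHmRel m g a cls e s v (kGen ι K α i * kGen ι K β j)
        (v ^ (-s α β) • (kGen ι K β j * kGen ι K α i))
  | KKother (α β : K) (i j : ZMod m) (h1 : i ≠ j) (h2 : i ≠ j + 1) (h3 : j ≠ i + 1) :
      DHmRel m g a cls e s v (kGen ι K α i * kGen ι K β j) (kGen ι K β j * kGen ι K α i)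
  | Kesame (α : K) (M : ι) (i : ZMod m) :
      DHmRel m g a cls e s v (kGen ι K α i * eGen ι K M i)
        (v ^ s α (cls M) • (eGen ι K M i * kGen ι K α i))
  | Kedown (α : K) (M : ι) (i j : ZMod m) (h : j = i + 1) :
      DHmRel m g a cls e s v (kGen ι K α i * eGen ι K M j)
        (v ^ (-s α (cls M)) • (eGen ι K M j * kGen ι K α i))
  | Keother (α : K) (M : ι) (i j : ZMod m) (h1 : i ≠ j) (h2 : j ≠ i + 1) :
      DHmRel m g a cls e s v (kGen ι K α i * eGen ι K M j) (eGen ι K M j * kGen ι K α i)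
  | hall (M N : ι) (i : ZMod m) :
      DHmRel m g a cls e s v (eGen ι K M i * eGen ι K N i)
        (∑ᶠ L : ι, (v ^ e (cls M) (cls N) * g L M N) • eGen ι K L i)
  | cross (M N : ι) (i : ZMod m) :
      DHmRel m g a cls e s v (eGen ι K M (i + 1) * eGen ι K N i)
        (∑ᶠ p : ι × ι,
          (v ^ e (cls M - cls p.1) (cls p.1 - cls p.2) * gammaHall g a M N p.1 p.2) •
            (kGen ι K (cls M - cls p.1) i * eGen ι K p.2 i * eGen ι K p.1 (i + 1)))
  | ecomm (M N : ι) (i j : ZMod m) (h1 : i ≠ j) (h2 : i ≠ j + 1) (h3 : j ≠ i + 1) :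
      DHmRel m g a cls e s v (eGen ι K M i * eGen ι K N j) (eGen ι K N j * eGen ι K M i)

/-- The Bridgeland Hall algebra `DH_m(A)` of `m`-cyclic complexes. -/
def DHmAlg (m : ℕ) (g : ι → ι → ι → ℕ) (a : ι → ℕ) (cls : ι → K) (e s : K → K → ℤ)
    (v : ℂ) : Type _ :=
  RingQuot (DHmRel m g a cls e s v)

variable (m : ℕ) (g : ι → ι → ι → ℕ) (a : ι → ℕ) (cls : ι → K) (e s : K → K → ℤ) (v : ℂ)

instance : Ring (DHmAlg m g a cls e s v) := inferInstanceAs (Ring (RingQuot _))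
instance : Algebra ℂ (DHmAlg m g a cls e s v) := inferInstanceAs (Algebra ℂ (RingQuot _))

/-- The generator `e_{M,i}` of `DH_m(A)`. -/
def DHme (M : ι) (i : ZMod m) : DHmAlg m g a cls e s v :=
  RingQuot.mkAlgHom ℂ _ (eGen ι K M i)
/-- The generator `K_{α,i}` of `DH_m(A)`. -/
def DHmk (α : K) (i : ZMod m) : DHmAlg m g a cls e s v :=
  RingQuot.mkAlgHom ℂ _ (kGen ι K α i)


section AuxProofs

private lemma prod3_ne_zero {τ : Type*} (x y z : τ) :
    FreeAlgebra.ι ℂ x * FreeAlgebra.ι ℂ y * FreeAlgebra.ι ℂ z ≠ 0 := fun h => by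
  simpa [FreeAlgebra.lift_ι_apply] using
    congrArg (FreeAlgebra.lift ℂ (fun _ : τ => (1 : ℂ))) h

private lemma support_smul_subset {σ β : Type*} [AddCommMonoid β] [Module ℂ β]
    (c : σ → ℂ) (x : σ → β) :
    (Function.support fun p => c p • x p) ⊆ Function.support c := fun p hp => by
  simp only [Function.mem_support] at hp ⊢
  intro h0
  exact hp (by rw [h0, zero_smul])

private lemma support_smul_eq {σ β : Type*} [AddCommMonoid β] [Module ℂ β]
    (c : σ → ℂ) (x : σ → β) (hx : ∀ p, x p ≠ 0) :
    (Function.support fun p => c p • x p) = Function.support c := by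
  ext p
  simp only [Function.mem_support]
  constructor
  · intro hp h0
    exact hp (by rw [h0, zero_smul])
  · intro hc h0
    apply hx p
    have h1 := congrArg (fun y => (c p)⁻¹ • y) h0
    simpa [smul_smul, inv_mul_cancel₀ hc] using h1

private lemma algHom_map_finsum {A B : Type*} {σ : Type*} [Semiring A] [Semiring B]
    [Algebra ℂ A] [Algebra ℂ B] (F : A →ₐ[ℂ] B) {f : σ → A}
    (hf : (Function.support f).Finite) : F (∑ᶠ x, f x) = ∑ᶠ x, F (f x) :=
  AddMonoidHom.map_finsum F.toLinearMap.toAddMonoidHom hf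

private lemma algHom_map_finsum_smul {A B : Type*} {σ : Type*} [Semiring A] [Semiring B]
    [Algebra ℂ A] [Algebra ℂ B] (F : A →ₐ[ℂ] B) (c : σ → ℂ) (x : σ → A)
    (hc : (Function.support c).Finite) :
    F (∑ᶠ p, c p • x p) = ∑ᶠ p, c p • F (x p) := by
  rw [algHom_map_finsum F (hc.subset (support_smul_subset c x))]
  simp only [map_smul]

/-- The canonical projection onto `DH_m(A)`. -/
private def dhPhi : FreeAlgebra ℂ (DHmGen ι K m) →ₐ[ℂ] DHmAlg m g a cls e s v :=
  RingQuot.mkAlgHom ℂ (DHmRel m g a cls e s v)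

private lemma dhPhi_rel {x y : FreeAlgebra ℂ (DHmGen ι K m)}
    (h : DHmRel m g a cls e s v x y) :
    dhPhi m g a cls e s v x = dhPhi m g a cls e s v y :=
  RingQuot.mkAlgHom_rel ℂ h

/-- The lift of the assignment on generators to the free algebra. -/
private def dhPsi (i : ZMod m) : FreeAlgebra ℂ (HcDGen ι K) →ₐ[ℂ] DHmAlg m g a cls e s v :=
  FreeAlgebra.lift ℂ (Sum.elim
    (Sum.elim (fun M => DHme m g a cls e s v M i) (fun M => DHme m g a cls e s v M (i + 1)))
    (Sum.elim (fun α => DHmk m g a cls e s v α i) (fun α => DHmk m g a cls e s v α (i + 1))))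

private lemma dhPsi_nup (i : ZMod m) (M : ι) :
    dhPsi m g a cls e s v i (νp ι K M) = dhPhi m g a cls e s v (eGen ι K M i) := by
  rw [νp, dhPsi, FreeAlgebra.lift_ι_apply]; rfl

private lemma dhPsi_num (i : ZMod m) (M : ι) :
    dhPsi m g a cls e s v i (νm ι K M) = dhPhi m g a cls e s v (eGen ι K M (i + 1)) := by
  rw [νm, dhPsi, FreeAlgebra.lift_ι_apply]; rfl

private lemma dhPsi_kp (i : ZMod m) (α : K) :
    dhPsi m g a cls e s v i (κcp ι K α) = dhPhi m g a cls e s v (kGen ι K α i) := by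
  rw [κcp, dhPsi, FreeAlgebra.lift_ι_apply]; rfl

private lemma dhPsi_km (i : ZMod m) (α : K) :
    dhPsi m g a cls e s v i (κcm ι K α) = dhPhi m g a cls e s v (kGen ι K α (i + 1)) := by
  rw [κcm, dhPsi, FreeAlgebra.lift_ι_apply]; rfl

end AuxProofs

/-- for `m = 0` or `m > 2` and `i ∈ Z_m`, the assignment
`𝒦⁺_α ↦ K_{α,i}`, `𝒦⁻_α ↦ K_{α,i+1}`, `ν⁺_M ↦ e_{M,i}`, `ν⁻_M ↦ e_{M,i+1}`
extends to an algebra homomorphism from the dual Heisenberg double Hall algebra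
`ȞD(A)` to the Bridgeland Hall algebra `DH_m(A)`. -/
theorem dualHeisenberg_to_bridgeland [DecidableEq ι]
    (m : ℕ) (hm : m = 0 ∨ 2 < m) (i : ZMod m)
    (z : ι) (hv : v ≠ 0)
    (heL : ∀ α β γ' : K, e (α + β) γ' = e α γ' + e β γ')
    (heR : ∀ α β γ' : K, e α (β + γ') = e α β + e α γ')
    (hsym : ∀ α β : K, s α β = e α β + e β α)
    (ha : ∀ M : ι, a M ≠ 0)
    (hgfin : ∀ M N : ι, (Function.support fun L => g L M N).Finite)
    (hqfin : ∀ M X : ι, (Function.support fun L => g M L X).Finite)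
    (hcls : ∀ L M N : ι, g L M N ≠ 0 → cls L = cls M + cls N)
    (hclsz : cls z = 0)
    (hzl : ∀ L M : ι, g L z M = if L = M then 1 else 0)
    (hzr : ∀ L M : ι, g L M z = if L = M then 1 else 0)
    (hcomp : ∀ L M N P : ι,
      ∑ᶠ X : ι, g L M X * g X N P = ∑ᶠ X : ι, g X M N * g L X P)
    (hgreen : ∀ M N M' N' : ι,
      ((a M * a N * a M' * a N' : ℕ) : ℂ) *
          ∑ᶠ L : ι, ((g L M N * g L M' N' : ℕ) : ℂ) / ((a L : ℕ) : ℂ) =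
        ∑ᶠ q : ι × ι × ι × ι,
          v ^ (-2 * e (cls q.1) (cls q.2.2.2)) *
            ((g M q.1 q.2.1 * g N q.2.2.1 q.2.2.2 * g M' q.1 q.2.2.1 *
              g N' q.2.1 q.2.2.2 : ℕ) : ℂ) *
            ((a q.1 * a q.2.1 * a q.2.2.1 * a q.2.2.2 : ℕ) : ℂ)) :
    ∃ F : HcDAlg g a cls e s v →ₐ[ℂ] DHmAlg m g a cls e s v,
      (∀ α : K, F (HcDκp g a cls e s v α) = DHmk m g a cls e s v α i) ∧
      (∀ α : K, F (HcDκm g a cls e s v α) = DHmk m g a cls e s v α (i + 1)) ∧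
      (∀ M : ι, F (HcDνp g a cls e s v M) = DHme m g a cls e s v M i) ∧
      (∀ M : ι, F (HcDνm g a cls e s v M) = DHme m g a cls e s v M (i + 1)) := by
  classical
  have h1 : (1 : ZMod m) ≠ 0 := by
    have : ((1 : ℕ) : ZMod m) ≠ 0 := by
      rw [Ne, ZMod.natCast_eq_zero_iff]
      intro hd
      rcases hm with rfl | hm'
      · simpa using hd
      · exact absurd (Nat.le_of_dvd one_pos hd) (by omega)
    simpa using this
  have h2 : (2 : ZMod m) ≠ 0 := by
    have : ((2 : ℕ) : ZMod m) ≠ 0 := by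
      rw [Ne, ZMod.natCast_eq_zero_iff]
      intro hd
      rcases hm with rfl | hm'
      · simpa using hd
      · exact absurd (Nat.le_of_dvd two_pos hd) (by omega)
    simpa using this
  have hne : ∀ j : ZMod m, j + 1 ≠ j := by
    intro j h
    apply h1
    have h' : j + 1 = j + 0 := by simpa using h
    exact add_left_cancel h'
  have hne2 : ∀ j : ZMod m, j ≠ j + 1 + 1 := by
    intro j h
    apply h2
    have h' : j + 0 = j + (1 + 1) := by simpa [add_assoc] using h
    have h'' := add_left_cancel h'
    rw [← one_add_one_eq_two, ← h'']
  have hrel : ∀ ⦃x y : FreeAlgebra ℂ (HcDGen ι K)⦄, HcDRel g a cls e s v x y →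
      dhPsi m g a cls e s v i x = dhPsi m g a cls e s v i y := by
    intro x y h
    induction h with
    | hallP M N =>
      have hfin : (Function.support fun L : ι =>
          (v ^ e (cls M) (cls N) * (g L M N : ℂ))).Finite := by
        apply (hgfin M N).subset
        intro L hL
        simp only [Function.mem_support] at hL ⊢
        intro h0
        exact hL (by rw [h0]; simp)
      rw [map_mul, dhPsi_nup, dhPsi_nup, ← map_mul,
        dhPhi_rel m g a cls e s v (DHmRel.hall M N i),
        algHom_map_finsum_smul _ _ _ hfin, algHom_map_finsum_smul _ _ _ hfin]
      exact finsum_congr fun L => by rw [dhPsi_nup]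
    | hallM M N =>
      have hfin : (Function.support fun L : ι =>
          (v ^ e (cls M) (cls N) * (g L M N : ℂ))).Finite := by
        apply (hgfin M N).subset
        intro L hL
        simp only [Function.mem_support] at hL ⊢
        intro h0
        exact hL (by rw [h0]; simp)
      rw [map_mul, dhPsi_num, dhPsi_num, ← map_mul,
        dhPhi_rel m g a cls e s v (DHmRel.hall M N (i + 1)),
        algHom_map_finsum_smul _ _ _ hfin, algHom_map_finsum_smul _ _ _ hfin]
      exact finsum_congr fun L => by rw [dhPsi_num]
    | KpNp α M =>
      rw [map_mul, dhPsi_kp, dhPsi_nup, ← map_mul,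
        dhPhi_rel m g a cls e s v (DHmRel.Kesame α M i),
        map_smul, map_mul, map_smul, map_mul, dhPsi_nup, dhPsi_kp]
    | KmNm α M =>
      rw [map_mul, dhPsi_km, dhPsi_num, ← map_mul,
        dhPhi_rel m g a cls e s v (DHmRel.Kesame α M (i + 1)),
        map_smul, map_mul, map_smul, map_mul, dhPsi_num, dhPsi_km]
    | KpKp α β =>
      rw [map_mul, dhPsi_kp, dhPsi_kp, ← map_mul,
        dhPhi_rel m g a cls e s v (DHmRel.KKsame α β i), dhPsi_kp]
    | KmKm α β =>
      rw [map_mul, dhPsi_km, dhPsi_km, ← map_mul,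
        dhPhi_rel m g a cls e s v (DHmRel.KKsame α β (i + 1)), dhPsi_km]
    | KpKm α β =>
      rw [map_mul, dhPsi_kp, dhPsi_km, ← map_mul,
        dhPhi_rel m g a cls e s v (DHmRel.KKdown α β i (i + 1) rfl),
        map_smul, map_mul, map_smul, map_mul, dhPsi_km, dhPsi_kp]
    | KmNp α M =>
      rw [map_mul, dhPsi_km, dhPsi_nup, ← map_mul,
        dhPhi_rel m g a cls e s v (DHmRel.Keother α M (i + 1) i (hne i) (hne2 i)),
        map_mul, map_mul, dhPsi_nup, dhPsi_km]
    | KpNm α M =>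
      rw [map_mul, dhPsi_kp, dhPsi_num, ← map_mul,
        dhPhi_rel m g a cls e s v (DHmRel.Kedown α M i (i + 1) rfl),
        map_smul, map_mul, map_smul, map_mul, dhPsi_num, dhPsi_kp]
    | cross N M =>
      by_cases hfin : (Function.support fun p : ι × ι =>
          v ^ e (cls N - cls p.2) (cls p.2 - cls p.1) * gammaHall g a N M p.2 p.1).Finite
      · have hfin' : (Function.support fun p : ι × ι =>
            v ^ e (cls N - cls p.1) (cls p.1 - cls p.2) * gammaHall g a N M p.1 p.2).Finite := by
          have heq : (Function.support fun p : ι × ι =>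
              v ^ e (cls N - cls p.1) (cls p.1 - cls p.2) * gammaHall g a N M p.1 p.2) =
              Prod.swap ⁻¹' (Function.support fun p : ι × ι =>
              v ^ e (cls N - cls p.2) (cls p.2 - cls p.1) * gammaHall g a N M p.2 p.1) := rfl
          rw [heq]
          exact Set.Finite.preimage Prod.swap_injective.injOn hfin
        rw [map_mul, dhPsi_num, dhPsi_nup, ← map_mul,
          dhPhi_rel m g a cls e s v (DHmRel.cross N M i),
          algHom_map_finsum_smul _ _ _ hfin', algHom_map_finsum_smul _ _ _ hfin,
          ← finsum_comp_equiv (Equiv.prodComm ι ι)]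
        exact finsum_congr fun p => by
          simp only [Equiv.prodComm_apply, Prod.fst_swap, Prod.snd_swap, map_mul,
            dhPsi_kp, dhPsi_nup, dhPsi_num]
      · have h0R : (∑ᶠ p : ι × ι,
            (v ^ e (cls N - cls p.2) (cls p.2 - cls p.1) * gammaHall g a N M p.2 p.1) •
              (κcp ι K (cls N - cls p.2) * νp ι K p.1 * νm ι K p.2)) = 0 := by
          apply finsum_of_infinite_support
          rw [support_smul_eq _
            (fun p : ι × ι => κcp ι K (cls N - cls p.2) * νp ι K p.1 * νm ι K p.2)
            (fun p : ι × ι => prod3_ne_zero _ _ _)]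
          exact hfin
        have h0L : (∑ᶠ p : ι × ι,
            (v ^ e (cls N - cls p.1) (cls p.1 - cls p.2) * gammaHall g a N M p.1 p.2) •
              (kGen ι K (cls N - cls p.1) i * eGen ι K p.2 i * eGen ι K p.1 (i + 1) :
                FreeAlgebra ℂ (DHmGen ι K m))) = 0 := by
          apply finsum_of_infinite_support
          rw [support_smul_eq _
            (fun p : ι × ι => (kGen ι K (cls N - cls p.1) i * eGen ι K p.2 i *
              eGen ι K p.1 (i + 1) : FreeAlgebra ℂ (DHmGen ι K m)))
            (fun p : ι × ι => prod3_ne_zero _ _ _)]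
          have heq : (Function.support fun p : ι × ι =>
              v ^ e (cls N - cls p.1) (cls p.1 - cls p.2) * gammaHall g a N M p.1 p.2) =
              Prod.swap ⁻¹' (Function.support fun p : ι × ι =>
              v ^ e (cls N - cls p.2) (cls p.2 - cls p.1) * gammaHall g a N M p.2 p.1) := rfl
          rw [heq]
          exact Set.Infinite.preimage hfin
            (by rw [Prod.swap_surjective.range_eq]; exact Set.subset_univ _)
        rw [map_mul, dhPsi_num, dhPsi_nup, ← map_mul,
          dhPhi_rel m g a cls e s v (DHmRel.cross N M i), h0L, map_zero, h0R, map_zero]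
  refine ⟨RingQuot.liftAlgHom ℂ ⟨dhPsi m g a cls e s v i, hrel⟩, ?_, ?_, ?_, ?_⟩
  · intro α
    show (RingQuot.liftAlgHom ℂ ⟨dhPsi m g a cls e s v i, hrel⟩)
      (RingQuot.mkAlgHom ℂ (HcDRel g a cls e s v) (κcp ι K α)) = _
    rw [RingQuot.liftAlgHom_mkAlgHom_apply, dhPsi_kp]
    rfl
  · intro α
    show (RingQuot.liftAlgHom ℂ ⟨dhPsi m g a cls e s v i, hrel⟩)
      (RingQuot.mkAlgHom ℂ (HcDRel g a cls e s v) (κcm ι K α)) = _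
    rw [RingQuot.liftAlgHom_mkAlgHom_apply, dhPsi_km]
    rfl
  · intro M
    show (RingQuot.liftAlgHom ℂ ⟨dhPsi m g a cls e s v i, hrel⟩)
      (RingQuot.mkAlgHom ℂ (HcDRel g a cls e s v) (νp ι K M)) = _
    rw [RingQuot.liftAlgHom_mkAlgHom_apply, dhPsi_nup]
    rfl
  · intro M
    show (RingQuot.liftAlgHom ℂ ⟨dhPsi m g a cls e s v i, hrel⟩)
      (RingQuot.mkAlgHom ℂ (HcDRel g a cls e s v) (νm ι K M)) = _
    rw [RingQuot.liftAlgHom_mkAlgHom_apply, dhPsi_num]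
    rfl


end
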